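/- Let R be a subring of ℤ_(2) and let ℤ^t_(2) denote ℤ_(2) as a module over R[ℤ] = R[t, t⁻¹] where t acts by negation. Then ℤ^t_(2) is a Cohn local R[ℤ]-module: for any square matrix A(t) over R[t^{±1}] with A(1) invertible over R, the matrix A(-1) is invertible over ℤ_(2). -/

import Mathlib

/-- The localization `ℤ_(2)` of `ℤ` at `2`, as a subring of `ℚ`:
rationals with odd (reduced) denominator. -/
def Zloc2 : Subring ℚ where
  carrier := {q | q.den.Coprime 2}
  zero_mem' := by simp [Set.mem_setOf_eq, Nat.coprime_one_left]
  one_mem' := by simp [Set.mem_setOf_eq, Nat.coprime_one_left]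
  add_mem' := by
    intro a b ha hb
    exact Nat.Coprime.coprime_dvd_left (Rat.add_den_dvd a b) (Nat.Coprime.mul ha hb)
  mul_mem' := by
    intro a b ha hb
    exact Nat.Coprime.coprime_dvd_left (Rat.mul_den_dvd a b) (Nat.Coprime.mul ha hb)
  neg_mem' := by
    intro a ha
    simpa [Set.mem_setOf_eq, Rat.den_neg_eq_den] using ha

/-- `-1` as a unit of a commutative ring. -/
def negOneUnit (R : Type*) [CommRing R] : Rˣ :=
  ⟨-1, -1, by ring, by ring⟩

/-- Evaluation of a Laurent polynomial at a unit `u` of `R`: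
`∑ aₙ Tⁿ ↦ ∑ aₙ uⁿ`. -/
noncomputable def lEval {R : Type*} [CommRing R] (u : Rˣ) (f : LaurentPolynomial R) : R :=
  f.coeff.sum fun n a => a * ((u ^ n : Rˣ) : R)

lemma odd_cast {m : ℕ} (hm : m.Coprime 2) : ((m : ℤ) : ZMod 2) = 1 := by
  have h1 : m % 2 = 1 := by
    rcases Nat.mod_two_eq_zero_or_one m with h | h
    · exfalso
      have : (2 : ℕ) ∣ m := Nat.dvd_of_mod_eq_zero h
      have h2 := Nat.Coprime.eq_one_of_dvd hm.symm this
      omega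
    · exact h
  have : ((m : ℤ) : ZMod 2) = ((m : ℕ) : ZMod 2) := by push_cast; ring
  rw [this, ← ZMod.natCast_mod, h1]
  norm_num

noncomputable def psi : Zloc2 →+* ZMod 2 where
  toFun x := ((x : ℚ).num : ZMod 2)
  map_one' := by norm_num
  map_mul' := by
    rintro ⟨a, ha⟩ ⟨b, hb⟩
    have key := Rat.mul_num_den' a b
    have hab : (a*b).den.Coprime 2 :=
      Nat.Coprime.coprime_dvd_left (Rat.mul_den_dvd a b) (Nat.Coprime.mul ha hb)
    have := congrArg (fun z : ℤ => (z : ZMod 2)) key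
    simp only [Int.cast_mul] at this
    rw [odd_cast ha, odd_cast hb, odd_cast hab] at this
    simpa using this
  map_zero' := by norm_num
  map_add' := by
    rintro ⟨a, ha⟩ ⟨b, hb⟩
    have key := Rat.add_num_den' a b
    have hab : (a+b).den.Coprime 2 :=
      Nat.Coprime.coprime_dvd_left (Rat.add_den_dvd a b) (Nat.Coprime.mul ha hb)
    have := congrArg (fun z : ℤ => (z : ZMod 2)) key
    simp only [Int.cast_mul, Int.cast_add] at this
    rw [odd_cast ha, odd_cast hb, odd_cast hab] at this
    simpa using this

lemma unit_of_psi {x : Zloc2} (hx : psi x ≠ 0) : IsUnit x := by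
  have hnum : ¬ (2:ℤ) ∣ (x:ℚ).num := by
    intro h
    exact hx ((ZMod.intCast_zmod_eq_zero_iff_dvd _ 2).mpr h)
  have hx0 : (x:ℚ) ≠ 0 := by
    intro h
    apply hnum
    rw [h]
    simp
  have hinv : ((x:ℚ)⁻¹) ∈ Zloc2 := by
    have hd : ((x:ℚ)⁻¹.den : ℤ) ∣ (x:ℚ).num := by
      conv_lhs => rw [← Rat.num_divInt_den (x:ℚ), Rat.inv_divInt]
      exact Rat.den_dvd _ _
    have hdd : (x:ℚ)⁻¹.den ∣ (x:ℚ).num.natAbs := by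
      have := Int.natAbs_dvd_natAbs.mpr hd
      simpa only [Int.natAbs_natCast] using this
    have hnum' : ((x:ℚ).num.natAbs).Coprime 2 := by
      rw [Nat.coprime_comm, Nat.Prime.coprime_iff_not_dvd Nat.prime_two]
      intro h
      exact hnum (Int.natAbs_dvd_natAbs.mp h)
    exact Nat.Coprime.coprime_dvd_left hdd hnum'
  exact isUnit_iff_exists_inv.mpr ⟨⟨(x:ℚ)⁻¹, hinv⟩, by
    ext
    push_cast
    exact mul_inv_cancel₀ hx0⟩

/-- Let `R ⊆ ℤ_(2)` be a subring and let `ℤ^t_(2)` be `ℤ_(2)` as an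
`R[t,t⁻¹]`-module with `t` acting by negation.  The key Cohn-locality property of
`ℤ^t_(2)`: for any square matrix `A(t)` over `R[t,t⁻¹]` such that `A(1)` is
invertible over `R`, the matrix `A(-1)` is invertible over `ℤ_(2)`. -/
theorem stmt_14 (R : Subring ℚ) (hR : R ≤ Zloc2) (n : ℕ)
    (A : Matrix (Fin n) (Fin n) (LaurentPolynomial ↥R))
    (h1 : IsUnit (A.map (lEval 1))) :
    IsUnit ((A.map (lEval (negOneUnit ↥R))).map (Subring.inclusion hR)) := by
  set ι : ↥R →+* ↥Zloc2 := Subring.inclusion hR with hι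
  set π : ↥R →+* ZMod 2 := psi.comp ι with hπ
  have hunits : ∀ v : (ZMod 2)ˣ, (v : ZMod 2) = 1 := by decide
  have hu : ∀ (u : (↥R)ˣ) (k : ℤ), π (((u ^ k : (↥R)ˣ) : ↥R)) = 1 := by
    intro u k
    have : π (((u ^ k : (↥R)ˣ) : ↥R)) = (((Units.map (π : ↥R →* ZMod 2)) (u ^ k) : (ZMod 2)ˣ) : ZMod 2) := rfl
    rw [this, hunits]
  have hentry : ∀ f : LaurentPolynomial ↥R,
      π (lEval (negOneUnit ↥R) f) = π (lEval 1 f) := by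
    intro f
    unfold lEval
    rw [Finsupp.sum, Finsupp.sum, map_sum, map_sum]
    apply Finset.sum_congr rfl
    intro k _
    rw [map_mul, map_mul, hu, hu]
  rw [Matrix.isUnit_iff_isUnit_det] at h1 ⊢
  have hdet : ((A.map (lEval (negOneUnit ↥R))).map ⇑ι).det
      = ι ((A.map (lEval (negOneUnit ↥R))).det) := by
    rw [RingHom.map_det]
    rfl
  rw [hdet]
  apply unit_of_psi
  have hcomp : psi (ι ((A.map (lEval (negOneUnit ↥R))).det))
      = π ((A.map (lEval (negOneUnit ↥R))).det) := rfl
  rw [hcomp]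
  have heq : π ((A.map (lEval (negOneUnit ↥R))).det) = π ((A.map (lEval 1)).det) := by
    have e1 : (A.map (lEval (negOneUnit ↥R))).map ⇑π = (A.map (lEval 1)).map ⇑π := by
      ext i j
      simp only [Matrix.map_apply]
      exact hentry _
    rw [RingHom.map_det, RingHom.map_det]
    show ((A.map (lEval (negOneUnit ↥R))).map ⇑π).det = ((A.map (lEval 1)).map ⇑π).det
    rw [e1]
  rw [heq]
  exact (h1.map π).ne_zero
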